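/- arXiv:2512.19404 — 3 statements merged into one kernel-verified Lean document; each statement's English description precedes it below -/
import Mathlib

section
/- All eigenvalues of the Lanzhou matrix of a graph Γ on n vertices are zero if and only if Γ is the complete graph K_n or the empty graph on n vertices. -/
open Matrix BigOperators Finset

def lanzhouMatrix {V : Type*} [Fintype V] (G : SimpleGraph V) [DecidableRel G.Adj] :
    Matrix V V ℝ := fun u v =>
  if G.Adj u v then
    (G.degree u : ℝ) * ((Fintype.card V : ℝ) - 1 - (G.degree u : ℝ))
      + (G.degree v : ℝ) * ((Fintype.card V : ℝ) - 1 - (G.degree v : ℝ))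
  else 0

theorem lanzhouMatrix_isHermitian {V : Type*} [Fintype V] (G : SimpleGraph V)
    [DecidableRel G.Adj] : (lanzhouMatrix G).IsHermitian := by
  ext i j
  simp only [lanzhouMatrix, conjTranspose_apply, star_trivial]
  by_cases h : G.Adj i j
  · rw [if_pos (G.adj_symm h), if_pos h]; ring
  · rw [if_neg (fun h' => h (G.adj_symm h')), if_neg h]

lemma herm_eigen_zero_iff {n : Type*} [Fintype n] [DecidableEq n] {A : Matrix n n ℝ}
    (hA : A.IsHermitian) : (∀ i, hA.eigenvalues i = 0) ↔ A = 0 := by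
  constructor
  · intro h
    have hst := hA.spectral_theorem
    have hd : Matrix.diagonal (RCLike.ofReal ∘ hA.eigenvalues) = (0 : Matrix n n ℝ) := by
      ext i j
      by_cases hij : i = j
      · subst hij; simp [h i]
      · simp [Matrix.diagonal_apply_ne _ hij]
    rw [hd] at hst
    simpa using hst
  · intro h i
    subst h
    have hv := hA.mulVec_eigenvectorBasis i
    rw [Matrix.zero_mulVec] at hv
    have hne := hA.eigenvectorBasis.orthonormal.ne_zero i
    rcases smul_eq_zero.mp hv.symm with h0 | h0
    · exact h0
    · exact absurd (by ext x; exact congrFun h0 x) hne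

lemma lanzhou_zero_of_degrees {V : Type*} [Fintype V] [DecidableEq V]
    (G : SimpleGraph V) [DecidableRel G.Adj]
    (h : lanzhouMatrix G = 0) : G = ⊤ ∨ G = ⊥ := by
  by_cases hbot : G = ⊥
  · exact Or.inr hbot
  left
  -- G has an edge
  obtain ⟨u, v, huv⟩ : ∃ u v, G.Adj u v := by
    by_contra hc
    push_neg at hc
    exact hbot (by ext a b; simp [hc a b])
  -- every vertex incident to an edge has degree n-1
  have key : ∀ a b : V, G.Adj a b → G.degree a = Fintype.card V - 1 := by
    intro a b hab
    have h0 := congrFun (congrFun h a) b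
    simp only [lanzhouMatrix, if_pos hab, Matrix.zero_apply] at h0
    have hda : (G.degree a : ℝ) ≤ (Fintype.card V : ℝ) - 1 := by
      have := G.degree_lt_card_verts a
      have : G.degree a + 1 ≤ Fintype.card V := this
      have := (Nat.cast_le (α := ℝ)).mpr this
      push_cast at this; linarith
    have hdb : (G.degree b : ℝ) ≤ (Fintype.card V : ℝ) - 1 := by
      have := G.degree_lt_card_verts b
      have : G.degree b + 1 ≤ Fintype.card V := this
      have := (Nat.cast_le (α := ℝ)).mpr this
      push_cast at this; linarith
    have h1 : (0:ℝ) ≤ (G.degree a : ℝ) * ((Fintype.card V : ℝ) - 1 - (G.degree a : ℝ)) :=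
      mul_nonneg (Nat.cast_nonneg _) (by linarith)
    have h2 : (0:ℝ) ≤ (G.degree b : ℝ) * ((Fintype.card V : ℝ) - 1 - (G.degree b : ℝ)) :=
      mul_nonneg (Nat.cast_nonneg _) (by linarith)
    have ha0 : (G.degree a : ℝ) * ((Fintype.card V : ℝ) - 1 - (G.degree a : ℝ)) = 0 := by
      linarith
    have hapos : 0 < G.degree a := by
      rw [G.degree_pos_iff_exists_adj]; exact ⟨b, hab⟩
    rcases mul_eq_zero.mp ha0 with h' | h'
    · exact absurd h' (by positivity)
    · have : (G.degree a : ℝ) = (Fintype.card V : ℝ) - 1 := by linarith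
      have hcard : 1 ≤ Fintype.card V := Fintype.card_pos_iff.mpr ⟨a⟩
      have : (G.degree a : ℝ) = ((Fintype.card V - 1 : ℕ) : ℝ) := by
        rw [this, Nat.cast_sub hcard]; norm_num
      exact_mod_cast this
  -- all vertices have degree n-1
  have hall : ∀ a : V, G.degree a = Fintype.card V - 1 := by
    intro a
    by_cases ha : ∃ b, G.Adj a b
    · obtain ⟨b, hb⟩ := ha; exact key a b hb
    · exfalso
      push_neg at ha
      have hdu := key u v huv
      have := (G.degree_pos_iff_exists_adj u).mpr ⟨v, huv⟩
      have hne : a ≠ u := by rintro rfl; exact ha v huv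
      have : G.Adj u a := by
        have hsub : G.neighborFinset u = Finset.univ.erase u := by
          apply Finset.eq_of_subset_of_card_le
          · intro x hx
            simp only [Finset.mem_erase, Finset.mem_univ, and_true]
            rintro rfl
            exact G.irrefl ((G.mem_neighborFinset _ _).mp hx)
          · rw [Finset.card_erase_of_mem (Finset.mem_univ u), Finset.card_univ,
              SimpleGraph.card_neighborFinset_eq_degree, hdu]
        have : a ∈ G.neighborFinset u := by
          rw [hsub]; exact Finset.mem_erase.mpr ⟨hne, Finset.mem_univ a⟩
        exact (G.mem_neighborFinset u a).mp this
      exact ha u this.symm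
  -- conclude G = ⊤
  ext a b
  simp only [SimpleGraph.top_adj]
  constructor
  · exact G.ne_of_adj
  · intro hab
    have hsub : G.neighborFinset a = Finset.univ.erase a := by
      apply Finset.eq_of_subset_of_card_le
      · intro x hx
        simp only [Finset.mem_erase, Finset.mem_univ, and_true]
        rintro rfl
        exact G.irrefl ((G.mem_neighborFinset _ _).mp hx)
      · rw [Finset.card_erase_of_mem (Finset.mem_univ a), Finset.card_univ,
          SimpleGraph.card_neighborFinset_eq_degree, hall a]
    have : b ∈ G.neighborFinset a := by
      rw [hsub]; exact Finset.mem_erase.mpr ⟨fun h => hab h.symm, Finset.mem_univ b⟩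
    exact (G.mem_neighborFinset a b).mp this

/-- all Lanzhou eigenvalues are zero iff Γ is complete or empty. -/
theorem lanzhou_eigenvalues_all_zero_iff {V : Type*} [Fintype V] [DecidableEq V]
    (G : SimpleGraph V) [DecidableRel G.Adj] :
    (∀ i, (lanzhouMatrix_isHermitian G).eigenvalues i = 0) ↔ G = ⊤ ∨ G = ⊥ := by
  rw [herm_eigen_zero_iff]
  constructor
  · exact lanzhou_zero_of_degrees G
  · rintro (rfl | rfl)
    · ext a b
      by_cases hab : (⊤ : SimpleGraph V).Adj a b
      · have hcard : 1 ≤ Fintype.card V := Fintype.card_pos_iff.mpr ⟨a⟩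
        have hdeg : ∀ x : V, (⊤ : SimpleGraph V).degree x = Fintype.card V - 1 := by
          intro x; convert SimpleGraph.complete_graph_degree x
        simp only [lanzhouMatrix, if_pos hab, hdeg, Matrix.zero_apply]
        rw [Nat.cast_sub hcard]
        push_cast
        ring
      · simp [lanzhouMatrix, hab]
    · ext a b
      simp [lanzhouMatrix]
end

section
/- The Lanzhou energy of a graph Γ on n vertices is zero if and only if Γ is the complete graph or the empty graph. -/
open Matrix BigOperators Finset

lemma lanzhou_eq_zero_iff {V : Type*} [Fintype V] [DecidableEq V]
    (G : SimpleGraph V) [DecidableRel G.Adj] :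
    lanzhouMatrix G = 0 ↔ G = ⊤ ∨ G = ⊥ := by
  constructor
  · intro h
    by_cases he : ∃ u v, G.Adj u v
    · left
      -- every vertex incident to an edge has degree n - 1
      have key : ∀ u v, G.Adj u v → G.degree u = Fintype.card V - 1 := by
        intro u v huv
        have h0 : lanzhouMatrix G u v = 0 := by rw [h]; rfl
        have hlt : ∀ w, (G.degree w : ℝ) ≤ (Fintype.card V : ℝ) - 1 := by
          intro w
          have h' : G.degree w + 1 ≤ Fintype.card V := G.degree_lt_card_verts w
          have : (G.degree w : ℝ) + 1 ≤ (Fintype.card V : ℝ) := by exact_mod_cast h'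
          linarith
        have h1 : (0:ℝ) ≤ (G.degree u : ℝ) * ((Fintype.card V : ℝ) - 1 - (G.degree u : ℝ)) :=
          mul_nonneg (by positivity) (by linarith [hlt u])
        have h2 : (0:ℝ) ≤ (G.degree v : ℝ) * ((Fintype.card V : ℝ) - 1 - (G.degree v : ℝ)) :=
          mul_nonneg (by positivity) (by linarith [hlt v])
        rw [lanzhouMatrix, if_pos huv] at h0
        have h3 : (G.degree u : ℝ) * ((Fintype.card V : ℝ) - 1 - (G.degree u : ℝ)) = 0 := by
          linarith
        have hdpos : 0 < G.degree u := (G.degree_pos_iff_exists_adj u).2 ⟨v, huv⟩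
        have h4 : (Fintype.card V : ℝ) - 1 - (G.degree u : ℝ) = 0 := by
          rcases mul_eq_zero.1 h3 with h | h
          · exact absurd h (by exact_mod_cast hdpos.ne')
          · exact h
        have hc : 0 < Fintype.card V := Fintype.card_pos_iff.2 ⟨u⟩
        have : (G.degree u : ℝ) = (Fintype.card V : ℝ) - 1 := by linarith
        have : (G.degree u : ℝ) = ((Fintype.card V - 1 : ℕ) : ℝ) := by
          rw [this, Nat.cast_sub hc]; norm_num
        exact_mod_cast this
      -- a vertex of degree n-1 is adjacent to all others
      have full : ∀ u, G.degree u = Fintype.card V - 1 → ∀ w, w ≠ u → G.Adj u w := by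
        intro u hu w hw
        by_contra hadj
        have hsub : G.neighborFinset u ⊆ (univ.erase u).erase w := by
          intro x hx
          rw [SimpleGraph.mem_neighborFinset] at hx
          refine Finset.mem_erase.2 ⟨?_, Finset.mem_erase.2 ⟨(G.ne_of_adj hx).symm, mem_univ x⟩⟩
          rintro rfl; exact hadj hx
        have := Finset.card_le_card hsub
        rw [SimpleGraph.card_neighborFinset_eq_degree, hu] at this
        have hwc : w ∈ univ.erase u := Finset.mem_erase.2 ⟨hw, mem_univ w⟩
        rw [Finset.card_erase_of_mem hwc, Finset.card_erase_of_mem (mem_univ u),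
          Finset.card_univ] at this
        have hc2 : 2 ≤ Fintype.card V := Fintype.one_lt_card_iff.2 ⟨w, u, hw⟩
        omega
      obtain ⟨u, v, huv⟩ := he
      ext a b
      simp only [SimpleGraph.top_adj]
      constructor
      · exact G.ne_of_adj
      · intro hab
        have hua : G.degree u = Fintype.card V - 1 := key u v huv
        -- every vertex is adjacent to something, hence has full degree
        have hadj_a : ∃ c, G.Adj a c := by
          by_cases hau : a = u
          · exact ⟨v, hau ▸ huv⟩
          · exact ⟨u, (full u hua a hau).symm⟩
        obtain ⟨c, hac⟩ := hadj_a
        exact full a (key a c hac) b (Ne.symm hab)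
    · right
      push_neg at he
      ext a b
      simp only [SimpleGraph.bot_adj, iff_false]
      exact he a b
  · rintro (rfl | rfl) <;> ext u v
    · simp only [lanzhouMatrix, Matrix.zero_apply]
      split_ifs with h
      · have hd : ∀ w : V, ((⊤ : SimpleGraph V).degree w : ℝ) = (Fintype.card V : ℝ) - 1 := by
          intro w
          have hc : 0 < Fintype.card V := Fintype.card_pos_iff.2 ⟨w⟩
          have : (⊤ : SimpleGraph V).degree w = Fintype.card V - 1 := by
            convert SimpleGraph.complete_graph_degree w using 2
          rw [this, Nat.cast_sub hc]; norm_num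
        rw [hd u, hd v]; ring
      · rfl
    · simp only [lanzhouMatrix, Matrix.zero_apply, SimpleGraph.bot_adj, if_false]

lemma eigs_zero_of_matrix_zero {V : Type*} [Fintype V] [DecidableEq V]
    (G : SimpleGraph V) [DecidableRel G.Adj] (h : lanzhouMatrix G = 0) (i : V) :
    (lanzhouMatrix_isHermitian G).eigenvalues i = 0 := by
  rw [(lanzhouMatrix_isHermitian G).eigenvalues_eq]
  simp only [h, Matrix.zero_mulVec, dotProduct_zero, map_zero]

lemma matrix_zero_of_eigs_zero {V : Type*} [Fintype V] [DecidableEq V]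
    (G : SimpleGraph V) [DecidableRel G.Adj]
    (h : ∀ i, (lanzhouMatrix_isHermitian G).eigenvalues i = 0) :
    lanzhouMatrix G = 0 := by
  have := (lanzhouMatrix_isHermitian G).spectral_theorem
  rw [this]
  have : Matrix.diagonal (RCLike.ofReal ∘ (lanzhouMatrix_isHermitian G).eigenvalues)
      = (0 : Matrix V V ℝ) := by
    ext a b
    by_cases hab : a = b <;> simp [Matrix.diagonal, hab, h]
  rw [this]
  simp

/-- the Lanzhou energy is zero iff Γ is complete or empty. -/
theorem lanzhou_energy_eq_zero_iff {V : Type*} [Fintype V] [DecidableEq V]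
    (G : SimpleGraph V) [DecidableRel G.Adj] :
    (∑ i, |(lanzhouMatrix_isHermitian G).eigenvalues i| = 0) ↔ G = ⊤ ∨ G = ⊥ := by
  rw [← lanzhou_eq_zero_iff]
  constructor
  · intro h
    apply matrix_zero_of_eigs_zero
    intro i
    have := (Finset.sum_eq_zero_iff_of_nonneg (fun i _ => abs_nonneg _)).1 h i (mem_univ i)
    exact abs_eq_zero.1 this
  · intro h
    rw [Finset.sum_eq_zero]
    intro i _
    rw [eigs_zero_of_matrix_zero G h i, abs_zero]
end

section
/- The Lanzhou spectrum of the crown graph S_n^0 (the complete bipartite graph K_{n,n} minus a perfect matching) consists of the eigenvalues a(n-1), a, -a, -a(n-1) with multiplicities 1, n-1, n-1, 1 respectively, where a = 2n(n-1); in particular its inertia is (n, n, 0) for n ≥ 2. -/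
open Matrix BigOperators Finset

/-- The crown graph S_n^0: vertices (i, a) with i : Fin n, a : Fin 2; two vertices are
adjacent iff they lie in different parts (different second coordinate) and i ≠ j.
This is K_{n,n} minus a perfect matching. -/
def crownGraph (n : ℕ) : SimpleGraph (Fin n × Fin 2) where
  Adj x y := x.2 ≠ y.2 ∧ x.1 ≠ y.1
  symm := ⟨fun x y h => ⟨h.1.symm, h.2.symm⟩⟩
  loopless := ⟨fun x h => h.1 rfl⟩

instance (n : ℕ) : DecidableRel (crownGraph n).Adj := fun _ _ =>
  inferInstanceAs (Decidable (_ ∧ _))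

section AuxLanzhou
open Polynomial

variable {n : Type*} [Fintype n] [DecidableEq n]

lemma charpoly_conj (A U V : Matrix n n ℝ) (hUV : U * V = 1) :
    (U * A * V).charpoly = A.charpoly := by
  have hVU : V * U = 1 := mul_eq_one_comm.mp hUV
  have h1 : charmatrix (U * A * V) =
      U.map C * charmatrix A * V.map C := by
    have hsc : (Matrix.scalar n (X : ℝ[X])) = (X : ℝ[X]) • (1 : Matrix n n ℝ[X]) := by
      simp [Matrix.scalar, smul_eq_diagonal_mul]
    rw [charmatrix, charmatrix, Matrix.mul_sub, Matrix.sub_mul, hsc]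
    congr 1
    · rw [Matrix.mul_smul, Matrix.smul_mul, Matrix.mul_one, ← Matrix.map_mul, hUV]
      simp
    · simp only [RingHom.mapMatrix_apply, ← Matrix.map_mul]
  rw [Matrix.charpoly, Matrix.charpoly, h1, det_mul, det_mul]
  rw [mul_comm, ← mul_assoc, ← det_mul, ← Matrix.map_mul, hVU]
  simp

lemma charpoly_diag (d : n → ℝ) :
    (Matrix.diagonal d).charpoly = ∏ i, (X - C (d i)) := by
  have : charmatrix (Matrix.diagonal d) = Matrix.diagonal fun i => X - C (d i) := by
    ext i j
    by_cases h : i = j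
    · subst h; simp [charmatrix_apply_eq]
    · simp [charmatrix_apply_ne _ _ _ h, Matrix.diagonal_apply_ne _ h]
  rw [Matrix.charpoly, this, det_diagonal]

lemma charpoly_eq_prod_eigenvalues (A : Matrix n n ℝ) (hA : A.IsHermitian) :
    A.charpoly = ((Finset.univ.val.map hA.eigenvalues).map fun r => X - C r).prod := by
  have hU := (Matrix.mem_unitaryGroup_iff).mp (hA.eigenvectorUnitary).2
  have := hA.spectral_theorem
  calc A.charpoly
      = ((hA.eigenvectorUnitary : Matrix n n ℝ) * Matrix.diagonal (RCLike.ofReal ∘ hA.eigenvalues)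
        * (star (hA.eigenvectorUnitary : Matrix n n ℝ))).charpoly := by rw [Unitary.conjStarAlgAut_apply] at this; rw [← this]
    _ = (Matrix.diagonal (RCLike.ofReal ∘ hA.eigenvalues)).charpoly := charpoly_conj _ _ _ hU
    _ = _ := by
        rw [charpoly_diag]
        rw [Finset.prod_eq_multiset_prod]
        simp

lemma eigs_multiset (A : Matrix n n ℝ) (hA : A.IsHermitian) :
    Finset.univ.val.map hA.eigenvalues = A.charpoly.roots := by
  rw [charpoly_eq_prod_eigenvalues A hA, roots_multiset_prod_X_sub_C]


variable {F : Type*} [Field F] {m : ℕ}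

noncomputable def Jm (F) [Field F] (m : ℕ) : Matrix (Fin m) (Fin m) F := Matrix.of fun _ _ => 1

lemma J_mul_J : Jm F m * Jm F m = (m : F) • Jm F m := by
  ext i j; simp [Jm, Matrix.mul_apply]

lemma det_cI_add_dJ (hm : 1 ≤ m) (c d : F) (hc : c ≠ 0) :
    Matrix.det (c • (1 : Matrix (Fin m) (Fin m) F) + d • Jm F m)
      = c ^ (m - 1) * (c + (m : F) * d) := by
  have h1 : c • (1 : Matrix (Fin m) (Fin m) F) + d • Jm F m
      = c • ((1 : Matrix (Fin m) (Fin m) F) +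
          Matrix.replicateCol (Fin 1) (fun _ : Fin m => d / c) * Matrix.replicateRow (Fin 1) (fun _ : Fin m => (1:F))) := by
    rw [smul_add]
    congr 1
    ext i j
    simp [Jm, Matrix.mul_apply, Matrix.replicateCol, Matrix.replicateRow, div_mul_eq_mul_div, mul_comm,
      mul_div_assoc]
    field_simp
  rw [h1, det_smul]
  erw [Matrix.det_one_add_replicateCol_mul_replicateRow (ι := Fin 1)]
  have : (1 : F) + (fun _ => (1:F)) ⬝ᵥ (fun _ : Fin m => d / c) = 1 + (m : F) * (d / c) := by
    simp [dotProduct]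
  rw [this]
  have hm' : c ^ Fintype.card (Fin m) = c ^ (m - 1) * c := by
    rw [Fintype.card_fin, ← pow_succ]
    congr 1
    omega
  rw [hm']
  field_simp

lemma det_crown_blocks (hm : 2 ≤ m) (x b : F) (hx : x ≠ 0) (hxb : x ^ 2 - b ^ 2 ≠ 0) :
    Matrix.det (Matrix.fromBlocks
        (x • (1 : Matrix (Fin m) (Fin m) F)) (-(b • (Jm F m - 1)))
        (-(b • (Jm F m - 1))) (x • (1 : Matrix (Fin m) (Fin m) F)))
      = (x ^ 2 - b ^ 2) ^ (m - 1) * (x ^ 2 - (((m : F) - 1) * b) ^ 2) := by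
  letI : Invertible (x • (1 : Matrix (Fin m) (Fin m) F)) :=
    ⟨x⁻¹ • 1, by rw [smul_mul_smul_comm, inv_mul_cancel₀ hx, one_smul, Matrix.one_mul],
      by rw [smul_mul_smul_comm, mul_inv_cancel₀ hx, one_smul, Matrix.one_mul]⟩
  rw [Matrix.det_fromBlocks₂₂]
  have hinv : ⅟(x • (1 : Matrix (Fin m) (Fin m) F)) = x⁻¹ • 1 := rfl
  rw [hinv]
  have hKK : (Jm F m - 1) * (Jm F m - 1) = ((m : F) - 2) • Jm F m + 1 := by
    rw [Matrix.sub_mul, Matrix.mul_sub, Matrix.mul_sub, J_mul_J, Matrix.one_mul, Matrix.mul_one,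
      Matrix.mul_one, sub_smul]
    abel_nf
    module
  have hmid : x • (1 : Matrix (Fin m) (Fin m) F) -
      -(b • (Jm F m - 1)) * (x⁻¹ • 1) * -(b • (Jm F m - 1))
      = (x - x⁻¹ * b ^ 2) • (1 : Matrix (Fin m) (Fin m) F) +
        (-(x⁻¹ * b ^ 2 * ((m : F) - 2))) • Jm F m := by
    simp only [Matrix.neg_mul, Matrix.mul_neg, neg_neg, Matrix.smul_mul, Matrix.mul_smul,
      Matrix.mul_one, smul_smul]
    rw [hKK]
    module
  rw [hmid]
  have hc : x - x⁻¹ * b ^ 2 ≠ 0 := by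
    intro h
    apply hxb
    have := congrArg (fun t => x * t) h
    simp only [mul_sub, mul_zero] at this
    field_simp at this
    linear_combination this
  rw [det_cI_add_dJ (by omega) _ _ hc, Matrix.det_smul, Matrix.det_one, mul_one, Fintype.card_fin]
  have h1 : x ^ (m - 1) * (x - x⁻¹ * b ^ 2) ^ (m - 1) = (x ^ 2 - b ^ 2) ^ (m - 1) := by
    rw [← mul_pow]
    congr 1
    field_simp
  have h2 : x * (x - x⁻¹ * b ^ 2 + (m : F) * -(x⁻¹ * b ^ 2 * ((m : F) - 2)))
      = x ^ 2 - (((m : F) - 1) * b) ^ 2 := by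
    field_simp
    ring
  have hxm : x ^ m = x ^ (m - 1) * x := by rw [← pow_succ]; congr 1; omega
  rw [hxm]
  linear_combination (x * (x - x⁻¹ * b ^ 2 + (m : F) * -(x⁻¹ * b ^ 2 * ((m : F) - 2)))) * h1
    + (x ^ 2 - b ^ 2) ^ (m - 1) * h2

lemma crown_degree (n : ℕ) (x : Fin n × Fin 2) : (crownGraph n).degree x = n - 1 := by
  rw [← SimpleGraph.card_neighborFinset_eq_degree]
  have : (crownGraph n).neighborFinset x = (({x.1}ᶜ : Finset (Fin n)) ×ˢ ({x.2}ᶜ : Finset (Fin 2))) := by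
    ext y
    rw [SimpleGraph.mem_neighborFinset]
    simp [SimpleGraph.mem_neighborFinset, crownGraph, Finset.mem_product, eq_comm, and_comm]
  rw [this, Finset.card_product, Finset.card_compl, Finset.card_compl]
  simp [Fintype.card_fin]

lemma lanzhou_crown_apply (n : ℕ) (hn : 2 ≤ n) (x y : Fin n × Fin 2) :
    lanzhouMatrix (crownGraph n) x y =
      if x.2 ≠ y.2 ∧ x.1 ≠ y.1 then (2 * (n:ℝ) * ((n:ℝ) - 1)) else 0 := by
  by_cases h : (crownGraph n).Adj x y
  · rw [lanzhouMatrix, if_pos h, if_pos ((by exact h) : x.2 ≠ y.2 ∧ x.1 ≠ y.1)]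
    rw [crown_degree, crown_degree]
    have h1 : ((n - 1 : ℕ) : ℝ) = (n : ℝ) - 1 := by
      have : 1 ≤ n := le_trans (by norm_num) hn
      push_cast [this]; ring
    have h2 : (Fintype.card (Fin n × Fin 2) : ℝ) = 2 * n := by
      simp [Fintype.card_prod]; ring
    rw [h1, h2]; ring
  · rw [lanzhouMatrix, if_neg h, if_neg ((by exact h) : ¬(x.2 ≠ y.2 ∧ x.1 ≠ y.1))]

def crownEquiv (m : ℕ) : Fin m ⊕ Fin m ≃ Fin m × Fin 2 where
  toFun := Sum.elim (fun i => (i, 0)) (fun i => (i, 1))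
  invFun := fun p => if p.2 = 0 then Sum.inl p.1 else Sum.inr p.1
  left_inv := by rintro (i | i) <;> simp
  right_inv := by
    rintro ⟨i, s⟩
    fin_cases s <;> simp

lemma crown_block (m : ℕ) (hn : 2 ≤ m) :
    (lanzhouMatrix (crownGraph m)).submatrix (crownEquiv m) (crownEquiv m)
      = Matrix.fromBlocks 0 ((2 * (m:ℝ) * ((m:ℝ) - 1)) • (Jm ℝ m - 1))
          ((2 * (m:ℝ) * ((m:ℝ) - 1)) • (Jm ℝ m - 1)) 0 := by
  ext i j
  rcases i with i | i <;> rcases j with j | j <;>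
    simp only [Matrix.submatrix_apply, crownEquiv, Equiv.coe_fn_mk, Sum.elim_inl, Sum.elim_inr,
      lanzhou_crown_apply m hn, Matrix.fromBlocks_apply₁₁, Matrix.fromBlocks_apply₁₂,
      Matrix.fromBlocks_apply₂₁, Matrix.fromBlocks_apply₂₂, Matrix.zero_apply,
      Matrix.smul_apply, Matrix.sub_apply, Jm, Matrix.of_apply, Matrix.one_apply] <;>
    by_cases h : i = j <;>
    simp [h]

lemma charpoly_crown_blocks (m : ℕ) (hm : 2 ≤ m) (a : ℝ) :
    (Matrix.fromBlocks 0 (a • (Jm ℝ m - 1)) (a • (Jm ℝ m - 1))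
        (0 : Matrix (Fin m) (Fin m) ℝ)).charpoly
      = ((X - C a) * (X + C a)) ^ (m - 1) *
        ((X - C (((m:ℝ) - 1) * a)) * (X + C (((m:ℝ) - 1) * a))) := by
  set F := FractionRing ℝ[X]
  set φ : ℝ[X] →+* F := algebraMap ℝ[X] F with hφ
  have hinj : Function.Injective φ := IsFractionRing.injective ℝ[X] F
  apply hinj
  set B : Matrix (Fin m) (Fin m) ℝ := a • (Jm ℝ m - 1) with hB
  have hmap : (charmatrix (Matrix.fromBlocks 0 B B 0)).map φ =
      Matrix.fromBlocks (φ X • (1 : Matrix (Fin m) (Fin m) F)) (-(φ (C a) • (Jm F m - 1)))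
        (-(φ (C a) • (Jm F m - 1))) (φ X • 1) := by
    ext i j
    rcases i with i | i <;> rcases j with j | j <;> by_cases h : i = j <;>
      simp [charmatrix_apply, Matrix.map_apply, hB, Jm, h, Matrix.one_apply,
        Matrix.diagonal_apply, Matrix.smul_apply, Matrix.sub_apply, _root_.map_mul]
  have hX : φ (X : ℝ[X]) ≠ 0 := fun h => X_ne_zero (hinj (h.trans (map_zero φ).symm))
  have hXb : φ (X : ℝ[X]) ^ 2 - φ (C a) ^ 2 ≠ 0 := by
    have h2 : φ X ^ 2 - φ (C a) ^ 2 = φ (X ^ 2 - C (a ^ 2)) := by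
      rw [map_sub, map_pow, map_pow, map_pow]
    rw [h2]
    intro h
    exact Polynomial.X_pow_sub_C_ne_zero (by norm_num) (a ^ 2)
      (hinj (h.trans (map_zero φ).symm))
  rw [Matrix.charpoly, RingHom.map_det, RingHom.mapMatrix_apply, hmap, det_crown_blocks hm _ _ hX hXb]
  have hC : (C (((m:ℝ) - 1) * a) : ℝ[X]) = ((m : ℝ[X]) - 1) * C a := by
    rw [_root_.map_mul, map_sub]
    simp
  simp only [_root_.map_mul, map_pow, map_sub, _root_.map_add, _root_.map_one, map_natCast, hC]
  ring

lemma filter_replicate'' (p : ℝ → Prop) [DecidablePred p] (k : ℕ) (b : ℝ) :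
    Multiset.filter p (Multiset.replicate k b) = if p b then Multiset.replicate k b else 0 := by
  split_ifs with h
  · exact Multiset.filter_eq_self.2 fun c hc => (Multiset.eq_of_mem_replicate hc) ▸ h
  · exact Multiset.filter_eq_nil.2 fun c hc => (Multiset.eq_of_mem_replicate hc) ▸ h

end AuxLanzhou

open Polynomial in
/-- the Lanzhou spectrum of the crown graph S_n^0 is
{a(n-1)^1, a^{n-1}, (-a)^{n-1}, (-a(n-1))^1} with a = 2n(n-1); the inertia is (n, n, 0). -/
theorem lanzhou_spectrum_crown (n : ℕ) (hn : 2 ≤ n) :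
    (Multiset.map (lanzhouMatrix_isHermitian (crownGraph n)).eigenvalues Finset.univ.val
      = Multiset.replicate 1 ((2 * (n : ℝ) * ((n : ℝ) - 1)) * ((n : ℝ) - 1))
        + Multiset.replicate (n - 1) (2 * (n : ℝ) * ((n : ℝ) - 1))
        + Multiset.replicate (n - 1) (-(2 * (n : ℝ) * ((n : ℝ) - 1)))
        + Multiset.replicate 1 (-((2 * (n : ℝ) * ((n : ℝ) - 1)) * ((n : ℝ) - 1))))
    ∧ (univ.filter fun i => 0 < (lanzhouMatrix_isHermitian (crownGraph n)).eigenvalues i).card = n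
    ∧ (univ.filter fun i => (lanzhouMatrix_isHermitian (crownGraph n)).eigenvalues i < 0).card = n
    ∧ (univ.filter fun i => (lanzhouMatrix_isHermitian (crownGraph n)).eigenvalues i = 0).card = 0 := by
  have hn2 : (2:ℝ) ≤ (n:ℝ) := by exact_mod_cast hn
  set a : ℝ := 2 * (n : ℝ) * ((n : ℝ) - 1) with ha
  have hapos : 0 < a := by rw [ha]; nlinarith
  have han : 0 < a * ((n:ℝ) - 1) := by nlinarith
  set T : Multiset ℝ := Multiset.replicate 1 (a * ((n : ℝ) - 1))
        + Multiset.replicate (n - 1) a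
        + Multiset.replicate (n - 1) (-a)
        + Multiset.replicate 1 (-(a * ((n : ℝ) - 1))) with hT
  -- charpoly computation
  have hcp : (lanzhouMatrix (crownGraph n)).charpoly
      = (Multiset.map (fun r => Polynomial.X - Polynomial.C r) T).prod := by
    have h1 : (lanzhouMatrix (crownGraph n)).charpoly
        = (Matrix.fromBlocks 0 (a • (Jm ℝ n - 1)) (a • (Jm ℝ n - 1))
            (0 : Matrix (Fin n) (Fin n) ℝ)).charpoly := by
      rw [← crown_block n hn]
      exact (Matrix.charpoly_reindex (crownEquiv n).symm _).symm
    rw [h1, charpoly_crown_blocks n hn a]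
    rw [hT]
    simp only [Multiset.map_add, Multiset.map_replicate, Multiset.prod_add,
      Multiset.prod_replicate, pow_one, map_neg, sub_neg_eq_add]
    rw [show ((n:ℝ) - 1) * a = a * ((n:ℝ) - 1) from mul_comm _ _, mul_pow]
    ring
  have hroots : Multiset.map (lanzhouMatrix_isHermitian (crownGraph n)).eigenvalues univ.val
      = T := by
    rw [eigs_multiset _ (lanzhouMatrix_isHermitian (crownGraph n)), hcp,
      Polynomial.roots_multiset_prod_X_sub_C]
  have hcount : ∀ (p : ℝ → Prop) [DecidablePred p],
      (univ.filter fun i => p ((lanzhouMatrix_isHermitian (crownGraph n)).eigenvalues i)).card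
        = Multiset.card (Multiset.filter p T) := by
    intro p _
    rw [← hroots, Multiset.filter_map]
    rw [Multiset.card_map]
    rfl
  refine ⟨hroots, ?_, ?_, ?_⟩
  · refine (hcount (fun r => 0 < r)).trans ?_
    rw [hT]
    simp only [Multiset.filter_add, filter_replicate'', Multiset.card_add]
    rw [if_pos han, if_pos hapos, if_neg (by intro h; nlinarith), if_neg (by intro h; nlinarith)]
    simp only [Multiset.card_replicate, Multiset.card_zero]
    omega
  · refine (hcount (fun r => r < 0)).trans ?_
    rw [hT]
    simp only [Multiset.filter_add, filter_replicate'', Multiset.card_add]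
    rw [if_neg (by intro h; nlinarith), if_neg (by intro h; nlinarith), if_pos (by linarith),
      if_pos (by linarith)]
    simp only [Multiset.card_replicate, Multiset.card_zero]
    omega
  · refine (hcount (fun r => r = 0)).trans ?_
    rw [hT]
    simp only [Multiset.filter_add, filter_replicate'', Multiset.card_add]
    rw [if_neg (by intro h; nlinarith), if_neg (by intro h; nlinarith), if_neg (by intro h; nlinarith),
      if_neg (by intro h; nlinarith)]
    simp
end
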